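/- A semigroup ⟨A,·⟩ is an Abelian algebra if and only if ⟨A,·⟩ is stationary and for all a,b,c,d,u,v ∈ A the equality a·u·b = c·u·d implies a·v·b = c·v·d. -/

import Mathlib

universe u

/-- Terms (polynomial operations) of a groupoid `⟨A, op⟩` in `n` variables,
built from variables, constants and the binary operation. -/
inductive GTerm (A : Type u) (n : ℕ) : Type u where
  | var : Fin n → GTerm A n
  | const : A → GTerm A n
  | mul : GTerm A n → GTerm A n → GTerm A n

/-- Evaluation of a term under the binary operation `op` and an assignment of variables. -/
def GTerm.eval {A : Type u} (op : A → A → A) : {n : ℕ} → GTerm A n → (Fin n → A) → A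
  | _, .var i, v => v i
  | _, .const a, _ => a
  | _, .mul s t, v => op (GTerm.eval op s v) (GTerm.eval op t v)

/-- A groupoid `⟨A, op⟩` is an Abelian algebra: for every polynomial operation
`t(x, y₁, …, yₙ)` and all elements `u, v, c₁, …, cₙ, d₁, …, dₙ`,
`t(u, c̄) = t(u, d̄)` implies `t(v, c̄) = t(v, d̄)`. -/
def IsAbelianGroupoid {A : Type u} (op : A → A → A) : Prop :=
  ∀ (n : ℕ) (t : GTerm A (n + 1)) (u v : A) (c d : Fin n → A),
    t.eval op (Fin.cons u c) = t.eval op (Fin.cons u d) →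
    t.eval op (Fin.cons v c) = t.eval op (Fin.cons v d)

namespace Stmt9Aux

variable {A : Type u}

/-- Evaluate a word (list of `Option A`, `none` standing for the variable `x`)
at `x := a`.  The empty word evaluates to `a` (junk value, never used for real words). -/
def evalW (op : A → A → A) (a : A) : List (Option A) → A
  | [] => a
  | h :: t => List.foldl (fun x o => op x (Option.getD o a)) (Option.getD h a) t

theorem foldl_op (op : A → A → A)
    (hassoc : ∀ a b c : A, op (op a b) c = op a (op b c)) (a : A) :
    ∀ (l : List (Option A)) (x y : A),
      List.foldl (fun p o => op p (Option.getD o a)) (op x y) l =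
        op x (List.foldl (fun p o => op p (Option.getD o a)) y l)
  | [], x, y => rfl
  | h :: t, x, y => by
    simp only [List.foldl_cons]
    rw [hassoc, foldl_op op hassoc a t]

theorem evalW_append (op : A → A → A)
    (hassoc : ∀ a b c : A, op (op a b) c = op a (op b c)) (a : A)
    {l₁ l₂ : List (Option A)} (h₁ : l₁ ≠ []) (h₂ : l₂ ≠ []) :
    evalW op a (l₁ ++ l₂) = op (evalW op a l₁) (evalW op a l₂) := by
  obtain ⟨x, t₁, rfl⟩ := List.exists_cons_of_ne_nil h₁
  obtain ⟨y, t₂, rfl⟩ := List.exists_cons_of_ne_nil h₂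
  simp only [evalW, List.cons_append, List.foldl_cons, List.foldl_append]
  rw [foldl_op op hassoc a t₂]

theorem evalW_singleton (op : A → A → A) (a : A) (o : Option A) :
    evalW op a [o] = Option.getD o a := rfl

theorem foldl_const (op : A → A → A) (a b : A) :
    ∀ (l : List (Option A)), none ∉ l → ∀ x : A,
      List.foldl (fun p o => op p (Option.getD o a)) x l =
        List.foldl (fun p o => op p (Option.getD o b)) x l
  | [], _, _ => rfl
  | o :: t, h, x => by
    obtain ⟨y, rfl⟩ : ∃ y, o = some y := by
      cases o with
      | none => exact absurd List.mem_cons_self h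
      | some y => exact ⟨y, rfl⟩
    simp only [List.foldl_cons, Option.getD_some]
    exact foldl_const op a b t (fun hm => h (List.mem_cons_of_mem _ hm)) _

/-- A word containing no `none` evaluates independently of `a`. -/
theorem evalW_const (op : A → A → A)
    {l : List (Option A)} (hne : l ≠ []) (h : none ∉ l) (a b : A) :
    evalW op a l = evalW op b l := by
  obtain ⟨o, t, rfl⟩ := List.exists_cons_of_ne_nil hne
  obtain ⟨y, rfl⟩ : ∃ y, o = some y := by
    cases o with
    | none => exact absurd List.mem_cons_self h
    | some y => exact ⟨y, rfl⟩
  simp only [evalW, Option.getD_some]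
  exact foldl_const op a b t (fun hm => h (List.mem_cons_of_mem _ hm)) _

/-- Split a list at the last occurrence of `none`. -/
theorem split_last :
    ∀ (l : List (Option A)), none ∈ l →
      ∃ (P Q : List (Option A)), l = P ++ none :: Q ∧ none ∉ Q
  | [], h => absurd h List.not_mem_nil
  | o :: t, h => by
    by_cases ht : none ∈ t
    · obtain ⟨P, Q, hPQ, hQ⟩ := split_last t ht
      exact ⟨o :: P, Q, by rw [hPQ]; rfl, hQ⟩
    · have : o = none := by
        rcases List.mem_cons.mp h with h1 | h1
        · exact h1.symm
        · exact absurd h1 ht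
      exact ⟨[], t, by simp [this], ht⟩

/-- The pattern of a word: forgets values, remembers variable positions. -/
def pattern : List (Option A) → List (Option Unit) :=
  List.map (Option.map fun _ => ())

theorem pattern_nil_iff {l : List (Option A)} : pattern l = [] ↔ l = [] := by
  simp [pattern]

theorem pattern_append (l₁ l₂ : List (Option A)) :
    pattern (l₁ ++ l₂) = pattern l₁ ++ pattern l₂ := List.map_append

theorem none_mem_pattern {l : List (Option A)} : none ∈ pattern l ↔ none ∈ l := by
  simp only [pattern, List.mem_map]
  constructor
  · rintro ⟨o, ho, he⟩
    cases o with
    | none => exact ho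
    | some y => simp at he
  · intro h; exact ⟨none, h, rfl⟩

/-- Transfer a split along pattern equality. -/
theorem pattern_split {l₂ P Q : List (Option A)}
    (h : pattern (P ++ none :: Q) = pattern l₂) :
    ∃ P₂ Q₂ : List (Option A), l₂ = P₂ ++ none :: Q₂ ∧
      pattern P = pattern P₂ ∧ pattern Q = pattern Q₂ := by
  rw [pattern_append] at h
  obtain ⟨P₂, R₂, rfl, hP, hR⟩ := List.map_eq_append_iff.mp h.symm
  cases R₂ with
  | nil => simp [pattern] at hR
  | cons o Q₂ =>
    simp only [pattern, List.map_cons, List.cons.injEq] at hR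
    have ho : o = none := by
      cases o with
      | none => rfl
      | some y => simp at hR
    exact ⟨P₂, Q₂, by rw [ho], by rw [← hP]; rfl, hR.2.symm⟩

/-- Number of variable occurrences in a word. -/
def cnt : List (Option A) → ℕ := List.countP (fun o => Option.isNone o)

theorem cnt_append (l₁ l₂ : List (Option A)) :
    cnt (l₁ ++ l₂) = cnt l₁ + cnt l₂ := List.countP_append

theorem cnt_eq_zero {l : List (Option A)} : cnt l = 0 ↔ none ∉ l := by
  rw [cnt, List.countP_eq_zero]
  constructor
  · intro h hm; simpa using h _ hm
  · intro h o ho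
    cases o with
    | none => exact absurd ho h
    | some y => simp

theorem cnt_cons_none (l : List (Option A)) : cnt (none :: l) = cnt l + 1 := by
  simp [cnt, List.countP_cons]

theorem cnt_cons_some (y : A) (l : List (Option A)) :
    cnt (some y :: l) = cnt l := by
  simp [cnt, List.countP_cons]

theorem evalW_concat (op : A → A → A)
    (hassoc : ∀ a b c : A, op (op a b) c = op a (op b c)) (a : A)
    {P : List (Option A)} (hP : P ≠ []) (o : Option A) :
    evalW op a (P ++ [o]) = op (evalW op a P) (Option.getD o a) := by
  rw [evalW_append op hassoc a hP (by simp), evalW_singleton]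

theorem evalW_cons (op : A → A → A)
    (hassoc : ∀ a b c : A, op (op a b) c = op a (op b c)) (a : A)
    (o : Option A) {Q : List (Option A)} (hQ : Q ≠ []) :
    evalW op a (o :: Q) = op (Option.getD o a) (evalW op a Q) := by
  have h : o :: Q = [o] ++ Q := rfl
  rw [h, evalW_append op hassoc a (by simp) hQ, evalW_singleton]

theorem evalW_mid (op : A → A → A)
    (hassoc : ∀ a b c : A, op (op a b) c = op a (op b c)) (a : A)
    (o : Option A) {P Q : List (Option A)} (hP : P ≠ []) (hQ : Q ≠ []) :
    evalW op a (P ++ o :: Q) = op (op (evalW op a P) (Option.getD o a)) (evalW op a Q) := by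
  have h : P ++ o :: Q = (P ++ [o]) ++ Q := by simp
  rw [h, evalW_append op hassoc a (by simp) hQ, evalW_concat op hassoc a hP]

/-- The key combinatorial lemma: stationarity plus the middle condition
propagate equalities of word values from `u` to `v`. -/
theorem key (op : A → A → A)
    (hassoc : ∀ a b c : A, op (op a b) c = op a (op b c))
    (hL : ∀ u v b c : A, op u b = op u c → op v b = op v c)
    (hR : ∀ u v b c : A, op b u = op c u → op b v = op c v)
    (hM : ∀ a b c d uu vv : A,
        op (op a uu) b = op (op c uu) d → op (op a vv) b = op (op c vv) d) :
    ∀ (k : ℕ) (l₁ l₂ : List (Option A)), cnt l₁ = k →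
      pattern l₁ = pattern l₂ → ∀ u v : A,
      evalW op u l₁ = evalW op u l₂ → evalW op v l₁ = evalW op v l₂ := by
  intro k
  induction k using Nat.strong_induction_on with
  | _ k IH =>
  intro l₁ l₂ hk hp u v hu
  rcases Nat.eq_zero_or_pos k with rfl | hkpos
  · -- no occurrence of the variable
    have h1 : none ∉ l₁ := cnt_eq_zero.mp hk
    have h2 : none ∉ l₂ := by
      rw [← none_mem_pattern (l := l₂), ← hp, none_mem_pattern]; exact h1
    rcases eq_or_ne l₁ [] with rfl | hne₁
    · have h : l₂ = [] := pattern_nil_iff.mp (by simpa [pattern] using hp.symm)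
      subst h; rfl
    · have hne₂ : l₂ ≠ [] := by
        intro h; subst h
        exact hne₁ (pattern_nil_iff.mp (by simpa [pattern] using hp))
      calc evalW op v l₁ = evalW op u l₁ := evalW_const op hne₁ h1 v u
        _ = evalW op u l₂ := hu
        _ = evalW op v l₂ := evalW_const op hne₂ h2 u v
  · -- split at the last occurrence of the variable
    have hmem : none ∈ l₁ := by
      by_contra h
      rw [← cnt_eq_zero] at h
      omega
    obtain ⟨P, Q, rfl, hQ⟩ := split_last l₁ hmem
    obtain ⟨P₂, Q₂, rfl, hPp, hQp⟩ := pattern_split hp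
    have hQ₂ : none ∉ Q₂ := by
      rw [← none_mem_pattern (l := Q₂), ← hQp, none_mem_pattern]; exact hQ
    have hcntQ : cnt Q = 0 := cnt_eq_zero.mpr hQ
    have hkP : cnt P + 1 = k := by
      rw [← hk, cnt_append, cnt_cons_none, hcntQ]
    rcases eq_or_ne P [] with rfl | hPne
    · have hP₂ : P₂ = [] := pattern_nil_iff.mp (by simpa [pattern] using hPp.symm)
      subst hP₂
      rcases eq_or_ne Q [] with rfl | hQne
      · have hQ₂' : Q₂ = [] := pattern_nil_iff.mp (by simpa [pattern] using hQp.symm)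
        subst hQ₂'; exact rfl
      · have hQ₂ne : Q₂ ≠ [] := by
          intro h; subst h
          exact hQne (pattern_nil_iff.mp (by simpa [pattern] using hQp))
        simp only [List.nil_append] at hu ⊢
        rw [evalW_cons op hassoc u _ hQne, evalW_cons op hassoc u _ hQ₂ne,
          Option.getD_none] at hu
        rw [evalW_cons op hassoc v _ hQne, evalW_cons op hassoc v _ hQ₂ne,
          Option.getD_none]
        rw [evalW_const op hQne hQ v u, evalW_const op hQ₂ne hQ₂ v u]
        exact hL u v _ _ hu
    · have hP₂ne : P₂ ≠ [] := by
        intro h; subst h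
        exact hPne (pattern_nil_iff.mp (by simpa [pattern] using hPp))
      rcases eq_or_ne Q [] with rfl | hQne
      · have hQ₂' : Q₂ = [] := pattern_nil_iff.mp (by simpa [pattern] using hQp.symm)
        subst hQ₂'
        rw [show (P ++ [(none : Option A)]) = P ++ [none] from rfl] at hu
        rw [evalW_concat op hassoc u hPne, evalW_concat op hassoc u hP₂ne,
          Option.getD_none] at hu
        -- right stationarity: replace the final `u` by `v`
        have h1 : op (evalW op u P) v = op (evalW op u P₂) v := hR u v _ _ hu
        have h2 : evalW op u (P ++ [some v]) = evalW op u (P₂ ++ [some v]) := by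
          rw [evalW_concat op hassoc u hPne, evalW_concat op hassoc u hP₂ne,
            Option.getD_some]
          exact h1
        have h3 := IH (cnt P) (by omega) (P ++ [some v]) (P₂ ++ [some v])
          (by rw [cnt_append, cnt_cons_some]; rfl)
          (by rw [pattern_append, pattern_append, hPp])
          u v h2
        rw [evalW_concat op hassoc v hPne, evalW_concat op hassoc v hP₂ne,
          Option.getD_some] at h3
        rw [evalW_concat op hassoc v hPne, evalW_concat op hassoc v hP₂ne,
          Option.getD_none]
        exact h3
      · have hQ₂ne : Q₂ ≠ [] := by
          intro h; subst h
          exact hQne (pattern_nil_iff.mp (by simpa [pattern] using hQp))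
        rw [evalW_mid op hassoc u _ hPne hQne, evalW_mid op hassoc u _ hP₂ne hQ₂ne,
          Option.getD_none] at hu
        -- middle condition: replace the middle `u` by `v`
        have h1 : op (op (evalW op u P) v) (evalW op u Q) =
            op (op (evalW op u P₂) v) (evalW op u Q₂) := hM _ _ _ _ u v hu
        have h2 : evalW op u (P ++ some v :: Q) = evalW op u (P₂ ++ some v :: Q₂) := by
          rw [evalW_mid op hassoc u _ hPne hQne, evalW_mid op hassoc u _ hP₂ne hQ₂ne,
            Option.getD_some]
          exact h1
        have h3 := IH (cnt P) (by omega) (P ++ some v :: Q) (P₂ ++ some v :: Q₂)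
          (by rw [cnt_append, cnt_cons_some, hcntQ]; rfl)
          (by simp only [pattern_append, hPp]
              simp [pattern] at hQp ⊢
              exact hQp)
          u v h2
        rw [evalW_mid op hassoc v _ hPne hQne, evalW_mid op hassoc v _ hP₂ne hQ₂ne,
          Option.getD_some] at h3
        rw [evalW_mid op hassoc v _ hPne hQne, evalW_mid op hassoc v _ hP₂ne hQ₂ne,
          Option.getD_none]
        exact h3

/-- The word (list of factors) associated to a term, with the first variable
left open (`none`) and all other variables substituted via `c`. -/
def word : {n : ℕ} → GTerm A (n + 1) → (Fin n → A) → List (Option A)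
  | _, .var i, c => Fin.cases [none] (fun j => [some (c j)]) i
  | _, .const e, _ => [some e]
  | _, .mul s t, c => word s c ++ word t c

theorem word_ne_nil : ∀ {n : ℕ} (t : GTerm A (n + 1)) (c : Fin n → A),
    word t c ≠ []
  | _, .var i, c => by
    refine Fin.cases ?_ ?_ i <;> simp [word]
  | _, .const e, _ => by simp [word]
  | _, .mul s t, c => by
    simp only [word]
    exact fun h => word_ne_nil s c (List.append_eq_nil_iff.mp h).1

theorem eval_eq_evalW (op : A → A → A)
    (hassoc : ∀ a b c : A, op (op a b) c = op a (op b c)) :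
    ∀ {n : ℕ} (t : GTerm A (n + 1)) (c : Fin n → A) (a : A),
      GTerm.eval op t (Fin.cons a c) = evalW op a (word t c)
  | _, .var i, c, a => by
    refine Fin.cases ?_ ?_ i
    · simp [word, GTerm.eval, evalW]
    · intro j; simp [word, GTerm.eval, evalW]
  | _, .const e, _, a => by simp [word, GTerm.eval, evalW]
  | _, .mul s t, c, a => by
    simp only [GTerm.eval, word]
    rw [evalW_append op hassoc a (word_ne_nil s c) (word_ne_nil t c),
      eval_eq_evalW op hassoc s c a, eval_eq_evalW op hassoc t c a]

theorem word_pattern : ∀ {n : ℕ} (t : GTerm A (n + 1)) (c d : Fin n → A),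
    pattern (word t c) = pattern (word t d)
  | _, .var i, c, d => by
    refine Fin.cases ?_ ?_ i <;> simp [word, pattern]
  | _, .const e, _, _ => by simp [word, pattern]
  | _, .mul s t, c, d => by
    simp only [word, pattern_append, word_pattern s c d, word_pattern t c d]

end Stmt9Aux

/-- A semigroup is an Abelian algebra iff it is stationary and
`a·u·b = c·u·d` implies `a·v·b = c·v·d`. -/
theorem stmt_9 {A : Type u} (op : A → A → A)
    (hassoc : ∀ a b c : A, op (op a b) c = op a (op b c)) :
    IsAbelianGroupoid op ↔
      (((∀ u v b c : A, op u b = op u c → op v b = op v c) ∧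
        (∀ u v b c : A, op b u = op c u → op b v = op c v)) ∧
       (∀ a b c d uu vv : A,
          op (op a uu) b = op (op c uu) d → op (op a vv) b = op (op c vv) d)) := by
  constructor
  · intro hab
    refine ⟨⟨?_, ?_⟩, ?_⟩
    · -- left stationarity
      intro u v b c h
      have := hab 1 (.mul (.var 0) (.var (Fin.succ 0))) u v (fun _ => b) (fun _ => c)
      simp only [GTerm.eval, Fin.cons_zero, Fin.cons_succ] at this
      exact this h
    · -- right stationarity
      intro u v b c h
      have := hab 1 (.mul (.var (Fin.succ 0)) (.var 0)) u v (fun _ => b) (fun _ => c)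
      simp only [GTerm.eval, Fin.cons_zero, Fin.cons_succ] at this
      exact this h
    · -- middle condition
      intro a b c d uu vv h
      have := hab 2 (.mul (.mul (.var (Fin.succ 0)) (.var 0)) (.var (Fin.succ 1)))
        uu vv ![a, b] ![c, d]
      simp only [GTerm.eval, Fin.cons_zero, Fin.cons_succ, Matrix.cons_val_zero,
        Matrix.cons_val_one, Matrix.head_cons] at this
      exact this h
  · rintro ⟨⟨hL, hR⟩, hM⟩
    intro n t u v c d hu
    rw [Stmt9Aux.eval_eq_evalW op hassoc t c u,
      Stmt9Aux.eval_eq_evalW op hassoc t d u] at hu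
    rw [Stmt9Aux.eval_eq_evalW op hassoc t c v,
      Stmt9Aux.eval_eq_evalW op hassoc t d v]
    exact Stmt9Aux.key op hassoc hL hR hM (Stmt9Aux.cnt (Stmt9Aux.word t c))
      (Stmt9Aux.word t c) (Stmt9Aux.word t d) rfl
      (Stmt9Aux.word_pattern t c d) u v hu
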